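/- Let G be a connected graph obtained from connected graphs G_0 and G_1 by identifying a vertex of G_0 with a vertex of G_1 into a single common vertex u, and let G' be obtained from G_0 and a connected graph G_2 by identifying the same vertex of G_0 with a vertex of G_2 into the common vertex u. If |V(G_1)| = |V(G_2)| and |E(G_1)| = |E(G_2)|, then Σ_{e=w₁w₂ ∈ E(G_0)} m_{w₁}(e|G)·m_{w₂}(e|G) = Σ_{e=w₁w₂ ∈ E(G_0)} m_{w₁}(e|G')·m_{w₂}(e|G'), and Σ_{e=w₁w₂ ∈ E(G_0)} [n_{w₁}(e|G)·m_{w₂}(e|G) + n_{w₂}(e|G)·m_{w₁}(e|G)] = Σ_{e=w₁w₂ ∈ E(G_0)} [n_{w₁}(e|G')·m_{w₂}(e|G') + n_{w₂}(e|G')·m_{w₁}(e|G')]. -/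

import Mathlib

open SimpleGraph Finset
open scoped Classical

noncomputable section

variable {V : Type*}

/-- number of vertices strictly closer to `u` than to `v` -/
def szN (G : SimpleGraph V) (u v : V) : ℕ :=
  {w : V | G.dist u w < G.dist v w}.ncard

/-- distance from an edge (unordered pair) to a vertex -/
def eDist (G : SimpleGraph V) (e : Sym2 V) (w : V) : ℕ :=
  Sym2.lift ⟨fun x y => min (G.dist x w) (G.dist y w), fun x y => min_comm _ _⟩ e

/-- number of edges strictly closer to `u` than to `v` -/
def szM (G : SimpleGraph V) (u v : V) : ℕ :=
  {e : Sym2 V | e ∈ G.edgeSet ∧ eDist G e u < eDist G e v}.ncard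

/-- edge Szeged index -/
def szE [Fintype V] (G : SimpleGraph V) : ℕ :=
  ∑ e ∈ G.edgeFinset,
    Sym2.lift ⟨fun u v => szM G u v * szM G v u, fun u v => mul_comm _ _⟩ e

/-- edge-vertex Szeged index -/
def szEV [Fintype V] (G : SimpleGraph V) : ℚ :=
  (1/2) * ∑ e ∈ G.edgeFinset,
    Sym2.lift ⟨fun u v => ((szN G u v * szM G v u + szN G v u * szM G u v : ℕ) : ℚ),
      fun u v => by push_cast; ring⟩ e

/-- the graph obtained from `H₀` and `H₁` by identifying the vertex `u₀` of `H₀`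
with the vertex `u₁` of `H₁` into a single common vertex (represented by
`Sum.inl u₀`) -/
def glue {V₀ V₁ : Type*} (H₀ : SimpleGraph V₀) (H₁ : SimpleGraph V₁)
    (u₀ : V₀) (u₁ : V₁) : SimpleGraph (V₀ ⊕ {x : V₁ // x ≠ u₁}) where
  Adj a b :=
    match a, b with
    | Sum.inl x, Sum.inl y => H₀.Adj x y
    | Sum.inl x, Sum.inr y => x = u₀ ∧ H₁.Adj u₁ y.1
    | Sum.inr x, Sum.inl y => y = u₀ ∧ H₁.Adj u₁ x.1
    | Sum.inr x, Sum.inr y => H₁.Adj x.1 y.1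
  symm := by
    refine ⟨?_⟩
    rintro (x | x) (y | y) h
    · exact h.symm
    · exact h
    · exact h
    · exact h.symm
  loopless := by
    refine ⟨?_⟩
    rintro (x | x) h
    · exact H₀.irrefl h
    · exact H₁.irrefl h

section Aux

variable {V₀ V₁ : Type*} (H₀ : SimpleGraph V₀) (H₁ : SimpleGraph V₁) (u₀ : V₀) (u₁ : V₁)

/-- `Sum.inl` as a graph homomorphism into the glued graph. -/
def glInl : H₀ →g glue H₀ H₁ u₀ u₁ := ⟨Sum.inl, fun h => h⟩

/-- The canonical map `V₁ → V₀ ⊕ {x : V₁ // x ≠ u₁}`. -/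
def iotaV (z : V₁) : V₀ ⊕ {x : V₁ // x ≠ u₁} :=
  if h : z = u₁ then Sum.inl u₀ else Sum.inr ⟨z, h⟩

lemma iotaV_u₁ : iotaV u₀ u₁ u₁ = Sum.inl u₀ := dif_pos rfl

lemma iotaV_of_ne (z : {x : V₁ // x ≠ u₁}) : iotaV u₀ u₁ z.1 = Sum.inr z := by
  rw [iotaV, dif_neg z.2]

lemma iotaV_eq_inl {z : V₁} {c : V₀} (h : iotaV u₀ u₁ z = Sum.inl c) : z = u₁ := by
  by_contra hz
  rw [iotaV, dif_neg hz] at h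
  exact Sum.inr_ne_inl h

lemma iotaV_injective : Function.Injective (iotaV u₀ u₁) := by
  intro a b h
  unfold iotaV at h
  split_ifs at h with ha hb hb <;> simp_all

/-- `iotaV` as a graph homomorphism. -/
def glIota : H₁ →g glue H₀ H₁ u₀ u₁ where
  toFun := iotaV u₀ u₁
  map_rel' := by
    intro a b h
    unfold iotaV
    split_ifs with ha hb hb
    · exact absurd (ha ▸ hb ▸ h) H₁.irrefl
    · exact ⟨rfl, ha ▸ h⟩
    · exact ⟨rfl, hb ▸ h.symm⟩
    · exact h

end Aux

/-- Projection to `V₀`. -/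
def piZero {V₀ V₁ : Type*} (u₀ : V₀) (u₁ : V₁) : V₀ ⊕ {x : V₁ // x ≠ u₁} → V₀ :=
  Sum.elim id (fun _ => u₀)

/-- Projection to `V₁`. -/
def piOne {V₀ V₁ : Type*} (u₀ : V₀) (u₁ : V₁) : V₀ ⊕ {x : V₁ // x ≠ u₁} → V₁ :=
  Sum.elim (fun _ => u₁) Subtype.val

section Aux2

variable {V₀ V₁ : Type*} (H₀ : SimpleGraph V₀) (H₁ : SimpleGraph V₁) (u₀ : V₀) (u₁ : V₁)

lemma piZero_iotaV (z : V₁) : piZero u₀ u₁ (iotaV u₀ u₁ z) = u₀ := by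
  unfold iotaV; split_ifs <;> rfl

lemma piOne_iotaV (z : V₁) : piOne u₀ u₁ (iotaV u₀ u₁ z) = z := by
  unfold iotaV; split_ifs with h
  · exact h.symm
  · rfl

variable {H₀ H₁ u₀ u₁}

lemma step_bound (h₀ : H₀.Connected) (h₁ : H₁.Connected)
    {s t : V₀ ⊕ {x : V₁ // x ≠ u₁}} (h : (glue H₀ H₁ u₀ u₁).Adj s t) :
    H₀.dist (piZero u₀ u₁ s) (piZero u₀ u₁ t) +
      H₁.dist (piOne u₀ u₁ s) (piOne u₀ u₁ t) ≤ 1 := by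
  cases s with
  | inl a => cases t with
    | inl b =>
      have hab : H₀.Adj a b := h
      simp [piZero, piOne, SimpleGraph.dist_self, SimpleGraph.dist_eq_one_iff_adj.mpr hab]
    | inr z =>
      obtain ⟨ha, hz⟩ := (h : a = u₀ ∧ H₁.Adj u₁ z.1)
      subst ha
      simp [piZero, piOne, SimpleGraph.dist_self, SimpleGraph.dist_eq_one_iff_adj.mpr hz]
  | inr z => cases t with
    | inl b =>
      obtain ⟨hb, hz⟩ := (h : b = u₀ ∧ H₁.Adj u₁ z.1)
      subst hb
      simp [piZero, piOne, SimpleGraph.dist_self, SimpleGraph.dist_comm,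
        SimpleGraph.dist_eq_one_iff_adj.mpr hz]
    | inr w =>
      have hzw : H₁.Adj z.1 w.1 := h
      simp [piZero, piOne, SimpleGraph.dist_self, SimpleGraph.dist_eq_one_iff_adj.mpr hzw]

lemma walk_lower (h₀ : H₀.Connected) (h₁ : H₁.Connected)
    {s t : V₀ ⊕ {x : V₁ // x ≠ u₁}} (p : (glue H₀ H₁ u₀ u₁).Walk s t) :
    H₀.dist (piZero u₀ u₁ s) (piZero u₀ u₁ t) +
      H₁.dist (piOne u₀ u₁ s) (piOne u₀ u₁ t) ≤ p.length := by
  induction p with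
  | nil => simp [SimpleGraph.dist_self]
  | @cons s m t h q ih =>
    rw [SimpleGraph.Walk.length_cons]
    calc H₀.dist (piZero u₀ u₁ s) (piZero u₀ u₁ t) +
          H₁.dist (piOne u₀ u₁ s) (piOne u₀ u₁ t)
        ≤ (H₀.dist (piZero u₀ u₁ s) (piZero u₀ u₁ m) +
            H₀.dist (piZero u₀ u₁ m) (piZero u₀ u₁ t)) +
          (H₁.dist (piOne u₀ u₁ s) (piOne u₀ u₁ m) +
            H₁.dist (piOne u₀ u₁ m) (piOne u₀ u₁ t)) :=
          add_le_add (h₀.dist_triangle) (h₁.dist_triangle)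
      _ = (H₀.dist (piZero u₀ u₁ s) (piZero u₀ u₁ m) +
            H₁.dist (piOne u₀ u₁ s) (piOne u₀ u₁ m)) +
          (H₀.dist (piZero u₀ u₁ m) (piZero u₀ u₁ t) +
            H₁.dist (piOne u₀ u₁ m) (piOne u₀ u₁ t)) := by ring
      _ ≤ 1 + q.length := add_le_add (step_bound h₀ h₁ h) ih
      _ = q.length + 1 := add_comm _ _

lemma dist_inl_inl (h₀ : H₀.Connected) (h₁ : H₁.Connected)
    (hG : (glue H₀ H₁ u₀ u₁).Connected) (a b : V₀) :
    (glue H₀ H₁ u₀ u₁).dist (Sum.inl a) (Sum.inl b) = H₀.dist a b := by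
  apply le_antisymm
  · obtain ⟨p, hp⟩ := h₀.exists_walk_length_eq_dist a b
    calc (glue H₀ H₁ u₀ u₁).dist (Sum.inl a) (Sum.inl b)
        ≤ (p.map (glInl H₀ H₁ u₀ u₁)).length := SimpleGraph.dist_le _
      _ = H₀.dist a b := by rw [SimpleGraph.Walk.length_map, hp]
  · obtain ⟨q, hq⟩ := hG.exists_walk_length_eq_dist (Sum.inl a) (Sum.inl b)
    have := walk_lower h₀ h₁ q
    rw [hq] at this
    simpa [piZero, piOne, SimpleGraph.dist_self] using this

lemma dist_inl_iotaV (h₀ : H₀.Connected) (h₁ : H₁.Connected)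
    (hG : (glue H₀ H₁ u₀ u₁).Connected) (a : V₀) (z : V₁) :
    (glue H₀ H₁ u₀ u₁).dist (Sum.inl a) (iotaV u₀ u₁ z) =
      H₀.dist a u₀ + H₁.dist u₁ z := by
  apply le_antisymm
  · obtain ⟨p, hp⟩ := h₀.exists_walk_length_eq_dist a u₀
    obtain ⟨q, hq⟩ := h₁.exists_walk_length_eq_dist u₁ z
    have hkey := SimpleGraph.dist_le ((p.map (glInl H₀ H₁ u₀ u₁)).append
      ((q.map (glIota H₀ H₁ u₀ u₁)).copy (iotaV_u₁ u₀ u₁) rfl))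
    simp only [SimpleGraph.Walk.length_append, SimpleGraph.Walk.length_copy,
      SimpleGraph.Walk.length_map, hp, hq] at hkey
    refine hkey.trans_eq ?_
    congr 1
    exact (SimpleGraph.Walk.length_copy _ _ _).trans ((SimpleGraph.Walk.length_map _ _).trans hq)
  · obtain ⟨q, hq⟩ := hG.exists_walk_length_eq_dist (Sum.inl a) (iotaV u₀ u₁ z)
    have := walk_lower h₀ h₁ q
    rw [hq, show piZero u₀ u₁ (iotaV u₀ u₁ z) = u₀ from piZero_iotaV u₀ u₁ z,
      show piOne u₀ u₁ (iotaV u₀ u₁ z) = z from piOne_iotaV u₀ u₁ z] at this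
    simpa [piZero, piOne] using this

lemma dist_inl_inr (h₀ : H₀.Connected) (h₁ : H₁.Connected)
    (hG : (glue H₀ H₁ u₀ u₁).Connected) (a : V₀) (z : {x : V₁ // x ≠ u₁}) :
    (glue H₀ H₁ u₀ u₁).dist (Sum.inl a) (Sum.inr z) = H₀.dist a u₀ + H₁.dist u₁ z.1 := by
  rw [← iotaV_of_ne u₀ u₁ z]
  exact dist_inl_iotaV h₀ h₁ hG a z.1

lemma card_ne_aux {α : Type*} [Fintype α] (a : α) :
    Nat.card {x : α // x ≠ a} = Fintype.card α - 1 := by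
  rw [Nat.card_eq_fintype_card]
  have := Fintype.card_subtype_compl (fun x : α => x = a)
  simp only [Fintype.card_subtype_eq] at this
  simpa using this

lemma szN_glue [Fintype V₀] [Fintype V₁] (h₀ : H₀.Connected) (h₁ : H₁.Connected)
    (hG : (glue H₀ H₁ u₀ u₁).Connected) (x y : V₀) :
    szN (glue H₀ H₁ u₀ u₁) (Sum.inl x) (Sum.inl y) =
      szN H₀ x y + (if H₀.dist x u₀ < H₀.dist y u₀ then Fintype.card V₁ - 1 else 0) := by
  have hset : {w | (glue H₀ H₁ u₀ u₁).dist (Sum.inl x) w <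
        (glue H₀ H₁ u₀ u₁).dist (Sum.inl y) w}
      = Sum.inl '' {a | H₀.dist x a < H₀.dist y a} ∪
        Sum.inr '' (if H₀.dist x u₀ < H₀.dist y u₀ then
          (Set.univ : Set {x : V₁ // x ≠ u₁}) else ∅) := by
    ext w
    rw [Set.mem_setOf_eq]
    cases w with
    | inl a =>
      rw [dist_inl_inl h₀ h₁ hG, dist_inl_inl h₀ h₁ hG]
      split_ifs <;> simp
    | inr z =>
      rw [dist_inl_inr h₀ h₁ hG, dist_inl_inr h₀ h₁ hG,
        add_lt_add_iff_right]
      split_ifs with hc <;> simp [hc]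
  have hdisj : Disjoint (Sum.inl '' {a | H₀.dist x a < H₀.dist y a})
      ((Sum.inr : {x : V₁ // x ≠ u₁} → V₀ ⊕ {x : V₁ // x ≠ u₁}) ''
        (if H₀.dist x u₀ < H₀.dist y u₀ then Set.univ else ∅)) := by
    rw [Set.disjoint_left]
    rintro _ ⟨a, _, rfl⟩ ⟨z, _, hz⟩
    simp at hz
  rw [szN, hset, Set.ncard_union_eq hdisj,
    Set.ncard_image_of_injective _ Sum.inl_injective,
    Set.ncard_image_of_injective _ Sum.inr_injective]
  congr 1
  split_ifs
  · rw [Set.ncard_univ, card_ne_aux]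
  · exact Set.ncard_empty _

lemma glue_edgeSet :
    (glue H₀ H₁ u₀ u₁).edgeSet =
      Sym2.map Sum.inl '' H₀.edgeSet ∪ Sym2.map (iotaV u₀ u₁) '' H₁.edgeSet := by
  ext e
  constructor
  · induction e using Sym2.ind with
    | _ a b =>
      intro he
      rw [SimpleGraph.mem_edgeSet] at he
      cases a with
      | inl a => cases b with
        | inl b =>
          exact Or.inl ⟨s(a, b), H₀.mem_edgeSet.mpr he, (Sym2.map_pair_eq _ _ _)⟩
        | inr z =>
          obtain ⟨ha, hz⟩ := (he : a = u₀ ∧ H₁.Adj u₁ z.1)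
          refine Or.inr ⟨s(u₁, z.1), H₁.mem_edgeSet.mpr hz, ?_⟩
          rw [Sym2.map_pair_eq, iotaV_u₁, iotaV_of_ne, ha]
      | inr z => cases b with
        | inl b =>
          obtain ⟨hb, hz⟩ := (he : b = u₀ ∧ H₁.Adj u₁ z.1)
          refine Or.inr ⟨s(z.1, u₁), H₁.mem_edgeSet.mpr hz.symm, ?_⟩
          rw [Sym2.map_pair_eq, iotaV_u₁, iotaV_of_ne, hb]
        | inr w =>
          have hzw : H₁.Adj z.1 w.1 := he
          refine Or.inr ⟨s(z.1, w.1), H₁.mem_edgeSet.mpr hzw, ?_⟩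
          rw [Sym2.map_pair_eq, iotaV_of_ne, iotaV_of_ne]
  · rintro (⟨f, hf, rfl⟩ | ⟨f, hf, rfl⟩)
    · exact (glInl H₀ H₁ u₀ u₁).map_mem_edgeSet hf
    · exact (glIota H₀ H₁ u₀ u₁).map_mem_edgeSet hf

lemma eDist_map_inl (h₀ : H₀.Connected) (h₁ : H₁.Connected)
    (hG : (glue H₀ H₁ u₀ u₁).Connected) (e : Sym2 V₀) (x : V₀) :
    eDist (glue H₀ H₁ u₀ u₁) (Sym2.map Sum.inl e) (Sum.inl x) = eDist H₀ e x := by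
  induction e using Sym2.ind with
  | _ a b =>
    rw [Sym2.map_pair_eq]
    simp only [eDist, Sym2.lift_mk]
    rw [dist_inl_inl h₀ h₁ hG, dist_inl_inl h₀ h₁ hG]

lemma eDist_map_iotaV (h₀ : H₀.Connected) (h₁ : H₁.Connected)
    (hG : (glue H₀ H₁ u₀ u₁).Connected) (e : Sym2 V₁) (x : V₀) :
    eDist (glue H₀ H₁ u₀ u₁) (Sym2.map (iotaV u₀ u₁) e) (Sum.inl x) =
      H₀.dist x u₀ + eDist H₁ e u₁ := by
  induction e using Sym2.ind with
  | _ z w =>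
    rw [Sym2.map_pair_eq]
    simp only [eDist, Sym2.lift_mk]
    rw [SimpleGraph.dist_comm (G := glue H₀ H₁ u₀ u₁) (u := iotaV u₀ u₁ z) (v := Sum.inl x),
      SimpleGraph.dist_comm (G := glue H₀ H₁ u₀ u₁) (u := iotaV u₀ u₁ w) (v := Sum.inl x),
      dist_inl_iotaV h₀ h₁ hG, dist_inl_iotaV h₀ h₁ hG,
      SimpleGraph.dist_comm (G := H₁) (u := z) (v := u₁),
      SimpleGraph.dist_comm (G := H₁) (u := w) (v := u₁), min_add_add_left]

lemma szM_glue [Fintype V₀] [Fintype V₁] (h₀ : H₀.Connected) (h₁ : H₁.Connected)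
    (hG : (glue H₀ H₁ u₀ u₁).Connected) (x y : V₀) :
    szM (glue H₀ H₁ u₀ u₁) (Sum.inl x) (Sum.inl y) =
      szM H₀ x y + (if H₀.dist x u₀ < H₀.dist y u₀ then H₁.edgeFinset.card else 0) := by
  have hset : {e | e ∈ (glue H₀ H₁ u₀ u₁).edgeSet ∧
        eDist (glue H₀ H₁ u₀ u₁) e (Sum.inl x) < eDist (glue H₀ H₁ u₀ u₁) e (Sum.inl y)}
      = Sym2.map Sum.inl '' {e | e ∈ H₀.edgeSet ∧ eDist H₀ e x < eDist H₀ e y} ∪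
        Sym2.map (iotaV u₀ u₁) ''
          (if H₀.dist x u₀ < H₀.dist y u₀ then H₁.edgeSet else ∅) := by
    ext e
    constructor
    · rintro ⟨hmem, hlt⟩
      rw [glue_edgeSet] at hmem
      rcases hmem with ⟨f, hf, rfl⟩ | ⟨f, hf, rfl⟩
      · rw [eDist_map_inl h₀ h₁ hG, eDist_map_inl h₀ h₁ hG] at hlt
        exact Or.inl ⟨f, ⟨hf, hlt⟩, rfl⟩
      · rw [eDist_map_iotaV h₀ h₁ hG, eDist_map_iotaV h₀ h₁ hG,
          add_lt_add_iff_right] at hlt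
        exact Or.inr ⟨f, by rw [if_pos hlt]; exact hf, rfl⟩
    · rintro (⟨f, ⟨hf, hlt⟩, rfl⟩ | ⟨f, hf, rfl⟩)
      · refine ⟨(glue_edgeSet (H₀ := H₀) (H₁ := H₁) (u₀ := u₀) (u₁ := u₁)) ▸ Or.inl ⟨f, hf, rfl⟩, ?_⟩
        rw [eDist_map_inl h₀ h₁ hG, eDist_map_inl h₀ h₁ hG]
        exact hlt
      · split_ifs at hf with hc
        · refine ⟨(glue_edgeSet (H₀ := H₀) (H₁ := H₁) (u₀ := u₀) (u₁ := u₁)) ▸ Or.inr ⟨f, hf, rfl⟩, ?_⟩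
          rw [eDist_map_iotaV h₀ h₁ hG, eDist_map_iotaV h₀ h₁ hG,
            add_lt_add_iff_right]
          exact hc
        · exact absurd hf (Set.notMem_empty f)
  have hdisj : Disjoint (Sym2.map Sum.inl '' {e | e ∈ H₀.edgeSet ∧ eDist H₀ e x < eDist H₀ e y})
      (Sym2.map (iotaV u₀ u₁) ''
        (if H₀.dist x u₀ < H₀.dist y u₀ then H₁.edgeSet else ∅)) := by
    rw [Set.disjoint_left]
    rintro e ⟨f, _, rfl⟩ ⟨g, hg, hge⟩
    have hg' : g ∈ H₁.edgeSet := by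
      split_ifs at hg with hc
      · exact hg
      · exact absurd hg (Set.notMem_empty g)
    induction f using Sym2.ind with
    | _ a b =>
      induction g using Sym2.ind with
      | _ z w =>
        rw [SimpleGraph.mem_edgeSet] at hg'
        have hzw : z ≠ w := hg'.ne
        rw [Sym2.map_pair_eq, Sym2.map_pair_eq, Sym2.eq_iff] at hge
        rcases hge with ⟨hz, hw⟩ | ⟨hz, hw⟩
        · exact hzw ((iotaV_eq_inl u₀ u₁ hz).trans (iotaV_eq_inl u₀ u₁ hw).symm)
        · exact hzw ((iotaV_eq_inl u₀ u₁ hz).trans (iotaV_eq_inl u₀ u₁ hw).symm)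
  rw [szM, hset, Set.ncard_union_eq hdisj,
    Set.ncard_image_of_injective _ (Sym2.map.injective Sum.inl_injective),
    Set.ncard_image_of_injective _ (Sym2.map.injective (iotaV_injective u₀ u₁))]
  congr 1
  split_ifs
  · rw [Set.ncard_eq_toFinset_card', SimpleGraph.edgeFinset]
  · exact Set.ncard_empty _

end Aux2

/-- Let `G` (resp. `G'`) be the connected graph obtained from connected graphs
`G₀`, `G₁` (resp. `G₀`, `G₂`) by identifying a vertex of `G₀` with a vertex of
`G₁` (resp. of `G₂`) into a common vertex `u`. If `|V(G₁)| = |V(G₂)|` and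
`|E(G₁)| = |E(G₂)|`, then
`Σ_{e=w₁w₂ ∈ E(G₀)} m_{w₁}(e|G)·m_{w₂}(e|G) = Σ_{e=w₁w₂ ∈ E(G₀)} m_{w₁}(e|G')·m_{w₂}(e|G')`
and
`Σ_{e=w₁w₂ ∈ E(G₀)} [n_{w₁}(e|G)·m_{w₂}(e|G) + n_{w₂}(e|G)·m_{w₁}(e|G)]`
`= Σ_{e=w₁w₂ ∈ E(G₀)} [n_{w₁}(e|G')·m_{w₂}(e|G') + n_{w₂}(e|G')·m_{w₁}(e|G')]`. -/
theorem szeged_sums_glue_invariant {V₀ V₁ V₂ : Type*} [Fintype V₀] [Fintype V₁]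
    [Fintype V₂] (H₀ : SimpleGraph V₀) (H₁ : SimpleGraph V₁) (H₂ : SimpleGraph V₂)
    (u₀ : V₀) (u₁ : V₁) (u₂ : V₂)
    (h₀ : H₀.Connected) (h₁ : H₁.Connected) (h₂ : H₂.Connected)
    (hG : (glue H₀ H₁ u₀ u₁).Connected) (hG' : (glue H₀ H₂ u₀ u₂).Connected)
    (hV : Fintype.card V₁ = Fintype.card V₂)
    (hE : H₁.edgeFinset.card = H₂.edgeFinset.card) :
    (∑ e ∈ H₀.edgeFinset,
        Sym2.lift ⟨fun x y => szM (glue H₀ H₁ u₀ u₁) (Sum.inl x) (Sum.inl y) *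
            szM (glue H₀ H₁ u₀ u₁) (Sum.inl y) (Sum.inl x),
          fun x y => mul_comm _ _⟩ e =
      ∑ e ∈ H₀.edgeFinset,
        Sym2.lift ⟨fun x y => szM (glue H₀ H₂ u₀ u₂) (Sum.inl x) (Sum.inl y) *
            szM (glue H₀ H₂ u₀ u₂) (Sum.inl y) (Sum.inl x),
          fun x y => mul_comm _ _⟩ e) ∧
    (∑ e ∈ H₀.edgeFinset,
        Sym2.lift ⟨fun x y => szN (glue H₀ H₁ u₀ u₁) (Sum.inl x) (Sum.inl y) *
            szM (glue H₀ H₁ u₀ u₁) (Sum.inl y) (Sum.inl x) +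
            szN (glue H₀ H₁ u₀ u₁) (Sum.inl y) (Sum.inl x) *
            szM (glue H₀ H₁ u₀ u₁) (Sum.inl x) (Sum.inl y),
          fun x y => add_comm _ _⟩ e =
      ∑ e ∈ H₀.edgeFinset,
        Sym2.lift ⟨fun x y => szN (glue H₀ H₂ u₀ u₂) (Sum.inl x) (Sum.inl y) *
            szM (glue H₀ H₂ u₀ u₂) (Sum.inl y) (Sum.inl x) +
            szN (glue H₀ H₂ u₀ u₂) (Sum.inl y) (Sum.inl x) *
            szM (glue H₀ H₂ u₀ u₂) (Sum.inl x) (Sum.inl y),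
          fun x y => add_comm _ _⟩ e) := by
  constructor
  · refine Finset.sum_congr rfl fun e he => ?_
    induction e using Sym2.ind with
    | _ x y =>
      simp only [Sym2.lift_mk]
      rw [szM_glue h₀ h₁ hG x y, szM_glue h₀ h₁ hG y x,
        szM_glue h₀ h₂ hG' x y, szM_glue h₀ h₂ hG' y x, hE]
  · refine Finset.sum_congr rfl fun e he => ?_
    induction e using Sym2.ind with
    | _ x y =>
      simp only [Sym2.lift_mk]
      rw [szM_glue h₀ h₁ hG x y, szM_glue h₀ h₁ hG y x,
        szM_glue h₀ h₂ hG' x y, szM_glue h₀ h₂ hG' y x,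
        szN_glue h₀ h₁ hG x y, szN_glue h₀ h₁ hG y x,
        szN_glue h₀ h₂ hG' x y, szN_glue h₀ h₂ hG' y x, hE, hV]
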